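/- Fix n ≥ 1. Then: (i) 1 ∉ Q_0(V_n), and every x ∈ V_n with Q_0(x) = 0 may be written x = Q_0(y) + c·1 with y ∈ V_n and c ∈ F₂, so the Margolis homology of V_n with respect to Q_0 is one-dimensional, spanned by 1; (ii) for every m ≥ n+1, Q_m vanishes identically on V_n, so the Margolis homology of V_n with respect to Q_m is all of V_n. (Corollary 2.21 of the paper, remaining cases: H(z(n)/v_n; Q_0) ≅ F₂ and H(z(n)/v_n; Q_m) ≅ H_*(z(n)/v_n) for m ≥ n+1.) -/

import Mathlib

/-!
Let `F₂ := ZMod 2` and `A := MvPolynomial {i : ℕ // 1 ≤ i} F₂`, modeling the mod 2 dual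
Steenrod algebra, with Milnor primitives `Q m` as below.  For `n ≥ 1` let `Sn n ⊆ A` be the
`F₂`-subalgebra generated by `ξ₁², ξ₂, …, ξ_n`, and let `Vn n := S_n + S_n·ξ_{n+1}` be the set
of all elements `s + s' * ξ_{n+1}` with `s, s' ∈ S_n`; `Vn n` models `H_*(z(n)/v_n; F₂)`.

STATEMENT (Corollary 2.21, remaining cases): (i) `1 ∉ Q_0(V_n)`, and every `x ∈ V_n` with
`Q_0 x = 0` can be written `x = Q_0 y + c • 1` with `y ∈ V_n`, `c ∈ F₂`, so
`H(z(n)/v_n; Q_0) ≅ F₂` spanned by `1`; (ii) for every `m ≥ n + 1`, `Q_m` vanishes identically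
on `V_n`, so `H(z(n)/v_n; Q_m)` is all of `V_n`.
-/

open MvPolynomial

abbrev F₂ : Type := ZMod 2

/-- The mod 2 dual Steenrod algebra, modeled as a polynomial algebra on `ξ_i`, `i ≥ 1`. -/
abbrev A : Type := MvPolynomial {i : ℕ // 1 ≤ i} F₂

/-- The generators `ξ_k`, with the convention `ξ_0 = 1`. -/
noncomputable def ξ (k : ℕ) : A :=
  if h : 1 ≤ k then X (⟨k, h⟩ : {i : ℕ // 1 ≤ i}) else 1

/-- The Milnor primitive `Q_m`, as the unique `F₂`-derivation of `A` with
`Q_m (ξ_k) = ξ_{k-m-1} ^ (2 ^ (m+1))` for `k ≥ m + 1` and `Q_m (ξ_k) = 0` for `1 ≤ k ≤ m`. -/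
noncomputable def Q (m : ℕ) : Derivation F₂ A A :=
  MvPolynomial.mkDerivation F₂ fun i : {i : ℕ // 1 ≤ i} =>
    if m + 1 ≤ i.1 then ξ (i.1 - (m + 1)) ^ 2 ^ (m + 1) else 0

/-- The subalgebra `S_n = F₂[ξ₁², ξ₂, …, ξ_n] ⊆ A`, modeling `H_*(z(n); F₂)`. -/
noncomputable def Sn (n : ℕ) : Subalgebra F₂ A :=
  Algebra.adjoin F₂ ({ξ 1 ^ 2} ∪ {y : A | ∃ k : ℕ, 2 ≤ k ∧ k ≤ n ∧ y = ξ k})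

/-- `V_n = S_n + S_n · ξ_{n+1}` — all elements `s + s' * ξ_{n+1}` with `s, s' ∈ S_n` —
modeling `H_*(z(n)/v_n; F₂) ≅ F₂[ξ̄₁², ξ̄₂, …, ξ̄_n] ⊗ E(ξ̄_{n+1})`. -/
noncomputable def Vn (n : ℕ) : Set A :=
  {x : A | ∃ s ∈ Sn n, ∃ s' ∈ Sn n, x = s + s' * ξ (n + 1)}

-- ### basic setup
abbrev I : Type := {i : ℕ // 1 ≤ i}

def vr (j : ℕ) : I := ⟨j + 1, Nat.le_add_left 1 j⟩

@[simp] lemma vr_eq_vr {a b : ℕ} : vr a = vr b ↔ a = b := by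
  simp [vr, Subtype.ext_iff]

lemma vr_inj : Function.Injective vr := fun a b h => vr_eq_vr.mp h

lemma xi_succ (j : ℕ) : ξ (j + 1) = X (vr j) := by
  rw [ξ, dif_pos (Nat.le_add_left 1 j)]; rfl

@[simp] lemma xi_zero : ξ 0 = 1 := by simp [ξ]

lemma addself (a : A) : a + a = 0 := by
  rw [← two_smul F₂ a]
  rw [show (2 : F₂) = 0 by decide, zero_smul]

lemma Q_X (m : ℕ) (i : I) :
    Q m (X i) = if m + 1 ≤ i.1 then ξ (i.1 - (m + 1)) ^ 2 ^ (m + 1) else 0 :=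
  mkDerivation_X _ _ _

lemma Q0_X (j : ℕ) : Q 0 (X (vr j)) = ξ j ^ 2 := by
  rw [Q_X]
  simp only [vr, Nat.add_sub_cancel]
  rw [if_pos (Nat.le_add_left 1 j)]
  norm_num

-- ### the d-formula on monomials
lemma dmono (N : ℕ) (σ : I →₀ ℕ) (hsupp : ∀ i : I, σ i ≠ 0 → i.1 ≤ N + 1)
    (h0 : σ (vr 0) % 2 = 0) :
    Q 0 (monomial σ (1 : F₂)) = ∑ j ∈ Finset.range N,
      if σ (vr (j + 1)) % 2 = 1 then
        monomial (σ - Finsupp.single (vr (j + 1)) 1 + Finsupp.single (vr j) 2) (1 : F₂)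
      else 0 := by
  have hcast : ∀ c : ℕ, ((c : ℕ) : F₂) = ((c % 2 : ℕ) : F₂) := fun c =>
    (ZMod.natCast_mod c 2).symm
  have hQ : Q 0 (monomial σ (1 : F₂)) = σ.sum fun i c =>
      monomial (σ - Finsupp.single i 1) ((c : ℕ) : F₂) • (ξ (i.1 - 1) ^ 2) := by
    simp only [Q]
    rw [mkDerivation_monomial, one_smul]
    refine Finsupp.sum_congr fun i _ => ?_
    rw [if_pos (by omega : 0 + 1 ≤ i.1)]
    norm_num
  rw [hQ]
  rw [Finsupp.sum_of_support_subset σ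
      (s := (Finset.range (N + 1)).image vr) ?_ _ ?_]
  · rw [Finset.sum_image (fun a _ b _ h => vr_inj h), Finset.sum_range_succ']
    have h00 : monomial (σ - Finsupp.single (vr 0) 1) ((σ (vr 0) : ℕ) : F₂)
        • (ξ ((vr 0).1 - 1) ^ 2) = 0 := by
      rw [hcast, h0]
      rw [Nat.cast_zero, monomial_zero, zero_smul]
    rw [h00, add_zero]
    refine Finset.sum_congr rfl fun j _ => ?_
    have hv : (vr (j + 1)).1 - 1 = j + 1 := by simp [vr]
    rw [hv, hcast]
    rcases Nat.mod_two_eq_zero_or_one (σ (vr (j + 1))) with h | h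
    · rw [h, if_neg (by omega)]
      rw [Nat.cast_zero, monomial_zero, zero_smul]
    · rw [h, if_pos rfl, Nat.cast_one, xi_succ, smul_eq_mul,
        X_pow_eq_monomial, monomial_mul, mul_one]
  · intro i hi
    have h1 : σ i ≠ 0 := Finsupp.mem_support_iff.mp hi
    have h2 := hsupp i h1
    refine Finset.mem_image.mpr ⟨i.1 - 1, Finset.mem_range.mpr (by omega), ?_⟩
    exact Subtype.ext (by have := i.2; simp [vr]; omega)
  · intro i _
    rw [Nat.cast_zero, monomial_zero, zero_smul]

-- ### the contracting homotopy
noncomputable def Hm (n : ℕ) (σ : I →₀ ℕ) : A :=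
  if h : ∃ k, k < n ∧ (2 ≤ σ (vr k) ∨ σ (vr (k + 1)) % 2 = 1) then
    if σ (vr (Nat.find h + 1)) % 2 = 0 then
      monomial (σ - Finsupp.single (vr (Nat.find h)) 2
        + Finsupp.single (vr (Nat.find h + 1)) 1) (1 : F₂)
    else 0
  else 0

noncomputable def Hlin (n : ℕ) : A →ₗ[F₂] A :=
  Finsupp.lsum F₂ (fun σ : I →₀ ℕ => LinearMap.toSpanSingleton F₂ A (Hm n σ))
    ∘ₗ (AddMonoidAlgebra.coeffLinearEquiv F₂).toLinearMap

lemma Hlin_monomial (n : ℕ) (σ : I →₀ ℕ) (c : F₂) :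
    Hlin n (monomial σ c) = c • Hm n σ := by
  rw [Hlin, LinearMap.comp_apply, ← single_eq_monomial, LinearEquiv.coe_coe,
    AddMonoidAlgebra.coeffLinearEquiv_apply, AddMonoidAlgebra.coeff_single]
  exact Finsupp.lsum_single _ _ _ _

lemma Hm_zero (n : ℕ) : Hm n 0 = 0 := by
  rw [Hm, dif_neg]
  rintro ⟨k, -, h | h⟩ <;> simp at h

lemma Hm_eval (n k : ℕ) (σ : I →₀ ℕ) (hk : k < n) (h1 : ∀ j, j < k → σ (vr j) = 0)
    (h2 : σ (vr k) % 2 = 0) (h3 : 2 ≤ σ (vr k) ∨ σ (vr (k + 1)) % 2 = 1) :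
    Hm n σ = if σ (vr (k + 1)) % 2 = 0 then
      monomial (σ - Finsupp.single (vr k) 2 + Finsupp.single (vr (k + 1)) 1) (1 : F₂)
    else 0 := by
  have hex : ∃ j, j < n ∧ (2 ≤ σ (vr j) ∨ σ (vr (j + 1)) % 2 = 1) := ⟨k, hk, h3⟩
  have hfind : Nat.find hex = k := by
    rw [Nat.find_eq_iff]
    refine ⟨⟨hk, h3⟩, fun j hj => ?_⟩
    rintro ⟨hjn, hc | hc⟩
    · have := h1 j hj; omega
    · rcases Nat.lt_or_ge (j + 1) k with h | h
      · have := h1 (j + 1) h; omega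
      · have : j + 1 = k := by omega
        rw [this] at hc; omega
  rw [Hm, dif_pos hex, hfind]


-- ### Finsupp helpers
lemma app3i (σ : I →₀ ℕ) (a ta b tb : ℕ) (i : I) :
    (σ - Finsupp.single (vr a) ta + Finsupp.single (vr b) tb) i
      = σ i - (if vr a = i then ta else 0) + (if vr b = i then tb else 0) := by
  simp [Finsupp.tsub_apply, Finsupp.add_apply, Finsupp.single_apply]

lemma app3 (σ : I →₀ ℕ) (a ta b tb j : ℕ) :
    (σ - Finsupp.single (vr a) ta + Finsupp.single (vr b) tb) (vr j)
      = σ (vr j) - (if a = j then ta else 0) + (if b = j then tb else 0) := by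
  rw [app3i]
  congr 1
  · congr 1
    simp only [vr_eq_vr]
  · simp only [vr_eq_vr]

lemma sle (σ : I →₀ ℕ) (a ta c tc : ℕ) (hne : a ≠ c) (h : ta ≤ σ (vr a)) :
    Finsupp.single (vr a) ta ≤ σ - Finsupp.single (vr c) tc := by
  rw [Finsupp.le_iff]
  intro i hi
  have hne0 : Finsupp.single (vr a) ta i ≠ 0 := Finsupp.mem_support_iff.mp hi
  have hia : i = vr a := by
    by_contra hne2
    exact hne0 (Finsupp.single_eq_of_ne' (fun hh => hne2 hh.symm))
  subst hia
  rw [Finsupp.single_eq_same, Finsupp.tsub_apply,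
    Finsupp.single_eq_of_ne (by simp only [ne_eq, vr_eq_vr]; omega)]
  omega

lemma L1 (σ u v : I →₀ ℕ) (hu : u ≤ σ) : (σ - u + v) - v + u = σ := by
  rw [add_tsub_cancel_right, tsub_add_cancel_of_le hu]

lemma commL (σ u v w z : I →₀ ℕ) (hu : u ≤ σ - w) (hw : w ≤ σ - u) :
    (σ - w + z) - u + v = (σ - u + v) - w + z := by
  rw [← tsub_add_eq_add_tsub hu, ← tsub_add_eq_add_tsub hw, tsub_right_comm]
  exact add_right_comm _ _ _ |>.trans (by rw [add_right_comm])

-- ### predicates and span characterization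
def PV (n : ℕ) (σ : I →₀ ℕ) : Prop :=
  σ (vr 0) % 2 = 0 ∧ (∀ i : I, σ i ≠ 0 → i.1 ≤ n + 1) ∧ σ (vr n) ≤ 1

def PS (n : ℕ) (σ : I →₀ ℕ) : Prop :=
  σ (vr 0) % 2 = 0 ∧ (∀ i : I, σ i ≠ 0 → i.1 ≤ n)

def MV (n : ℕ) : Set A := {p : A | ∃ σ, PV n σ ∧ p = monomial σ 1}
def MS (n : ℕ) : Set A := {p : A | ∃ σ, PS n σ ∧ p = monomial σ 1}

lemma xi_one : ξ 1 = X (vr 0) := xi_succ 0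

lemma xi_gen (k : ℕ) (hk : 1 ≤ k) : ξ k = X (⟨k, hk⟩ : I) := by
  rw [ξ, dif_pos hk]

lemma mono_mem_Sn (n : ℕ) (σ : I →₀ ℕ) (hPS : PS n σ) :
    monomial σ (1 : F₂) ∈ Sn n := by
  obtain ⟨h0, hs⟩ := hPS
  rw [← prod_X_pow_eq_monomial]
  refine Subalgebra.prod_mem _ fun i hi => ?_
  have hne : σ i ≠ 0 := Finsupp.mem_support_iff.mp hi
  have hle := hs i hne
  have h1i := i.2
  rcases eq_or_lt_of_le h1i with h1 | h2
  · have hi0 : i = vr 0 := Subtype.ext (by show i.1 = 0 + 1; omega)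
    subst hi0
    have hp : X (vr 0) ^ σ (vr 0) = (ξ 1 ^ 2) ^ (σ (vr 0) / 2) := by
      rw [xi_one, ← pow_mul]
      congr 1
      omega
    rw [hp]
    have hgen : ξ 1 ^ 2 ∈ ({ξ 1 ^ 2} ∪ {y : A | ∃ k : ℕ, 2 ≤ k ∧ k ≤ n ∧ y = ξ k}) :=
      Set.mem_union_left _ (Set.mem_singleton _)
    exact pow_mem (Algebra.subset_adjoin hgen) _
  · have hx : X i = ξ i.1 := by
      rw [xi_gen i.1 h1i]
    rw [hx]
    have hgen : ξ i.1 ∈ ({ξ 1 ^ 2} ∪ {y : A | ∃ k : ℕ, 2 ≤ k ∧ k ≤ n ∧ y = ξ k}) :=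
      Set.mem_union_right _ ⟨i.1, h2, hle, rfl⟩
    exact pow_mem (Algebra.subset_adjoin hgen) _

lemma spanMV_le_Vn (n : ℕ) (hn : 1 ≤ n) :
    (Submodule.span F₂ (MV n) : Set A) ⊆ Vn n := by
  intro x hx
  induction hx using Submodule.span_induction with
  | mem p hp =>
    obtain ⟨σ, ⟨h0, hsupp, h1⟩, rfl⟩ := hp
    rcases Nat.lt_or_ge (σ (vr n)) 1 with hv | hv
    · have hPS : PS n σ := by
        refine ⟨h0, fun i hi => ?_⟩
        have := hsupp i hi
        rcases Nat.lt_or_ge i.1 (n + 1) with h | h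
        · omega
        · exfalso
          have : i = vr n := Subtype.ext (by simp [vr]; omega)
          rw [this] at hi
          omega
      exact ⟨_, mono_mem_Sn n σ hPS, 0, zero_mem _, by rw [zero_mul, add_zero]⟩
    · have hv1 : σ (vr n) = 1 := by omega
      set σ' := σ - Finsupp.single (vr n) 1 with hσ'
      have hle : Finsupp.single (vr n) 1 ≤ σ := Finsupp.single_le_iff.mpr (by omega)
      have hsplit : monomial σ (1 : F₂) = monomial σ' 1 * ξ (n + 1) := by
        rw [xi_succ, ← pow_one (X (vr n)), X_pow_eq_monomial, monomial_mul, mul_one,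
          tsub_add_cancel_of_le hle]
      have hs'v : ∀ i : I, σ' i = σ i - (if vr n = i then 1 else 0) := by
        intro i
        rw [hσ', Finsupp.tsub_apply, Finsupp.single_apply]
      have hPS : PS n σ' := by
        constructor
        · rw [hs'v, if_neg (by simp only [ne_eq, vr_eq_vr]; omega)]
          exact h0
        · intro i hi
          rw [hs'v] at hi
          have h2 := hsupp i (by intro h; rw [h] at hi; simp at hi)
          by_contra hgt
          have : i = vr n := Subtype.ext (by simp [vr]; omega)
          rw [this, if_pos rfl, hv1] at hi
          simp at hi
      exact ⟨0, zero_mem _, _, mono_mem_Sn n σ' hPS, by rw [hsplit, zero_add]⟩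
  | zero => exact ⟨0, zero_mem _, 0, zero_mem _, by rw [zero_mul, add_zero]⟩
  | add x y hx hy ihx ihy =>
    obtain ⟨s, hs, t, ht, rfl⟩ := ihx
    obtain ⟨u, hu, v, hv, rfl⟩ := ihy
    exact ⟨s + u, add_mem hs hu, t + v, add_mem ht hv, by ring⟩
  | smul c x hx ihx =>
    obtain ⟨s, hs, t, ht, rfl⟩ := ihx
    exact ⟨c • s, Subalgebra.smul_mem _ hs c, c • t, Subalgebra.smul_mem _ ht c,
      by rw [smul_add, smul_mul_assoc]⟩

lemma PS_zero (n : ℕ) : PS n 0 := ⟨by simp, by simp⟩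

lemma spanMS_mul (n : ℕ) (x y : A) (hx : x ∈ Submodule.span F₂ (MS n))
    (hy : y ∈ Submodule.span F₂ (MS n)) : x * y ∈ Submodule.span F₂ (MS n) := by
  induction hx using Submodule.span_induction with
  | mem p hp =>
    induction hy using Submodule.span_induction with
    | mem q hq =>
      obtain ⟨σ, hσ, rfl⟩ := hp
      obtain ⟨τ, hτ, rfl⟩ := hq
      refine Submodule.subset_span ⟨σ + τ, ⟨?_, ?_⟩, by rw [monomial_mul, one_mul]⟩
      · have := hσ.1; have := hτ.1
        rw [Finsupp.add_apply]
        omega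
      · intro i hi
        rw [Finsupp.add_apply] at hi
        rcases Nat.eq_zero_or_pos (σ i) with h | h
        · exact hτ.2 i (by omega)
        · exact hσ.2 i (by omega)
    | zero => rw [mul_zero]; exact zero_mem _
    | add q r hq hr ihq ihr => rw [mul_add]; exact add_mem ihq ihr
    | smul c q hq ihq => rw [mul_smul_comm]; exact Submodule.smul_mem _ _ ihq
  | zero => rw [zero_mul]; exact zero_mem _
  | add p q hp hq ihp ihq => rw [add_mul]; exact add_mem ihp ihq
  | smul c p hp ihp => rw [smul_mul_assoc]; exact Submodule.smul_mem _ _ ihp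

lemma Sn_le_spanMS (n : ℕ) (hn : 1 ≤ n) (s : A) (hs : s ∈ Sn n) :
    s ∈ Submodule.span F₂ (MS n) := by
  induction hs using Algebra.adjoin_induction with
  | mem x hx =>
    rcases hx with hx | ⟨k, hk2, hkn, rfl⟩
    · rw [Set.mem_singleton_iff] at hx
      subst hx
      refine Submodule.subset_span ⟨Finsupp.single (vr 0) 2, ⟨?_, ?_⟩, ?_⟩
      · rw [Finsupp.single_eq_same]
      · intro i hi
        have : i = vr 0 := by
          by_contra hne
          exact hi (Finsupp.single_eq_of_ne' (fun hh => hne hh.symm))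
        rw [this]; show 0 + 1 ≤ n; omega
      · rw [xi_one, X_pow_eq_monomial]
    · refine Submodule.subset_span ⟨Finsupp.single ⟨k, by omega⟩ 1, ⟨?_, ?_⟩, ?_⟩
      · rw [Finsupp.single_apply, if_neg (by intro h; have : k = 0 + 1 := congrArg Subtype.val h; omega)]
        rfl
      · intro i hi
        have : i = ⟨k, by omega⟩ := by
          by_contra hne
          exact hi (Finsupp.single_eq_of_ne' (fun hh => hne hh.symm))
        rw [this]; exact hkn
      · rw [xi_gen k (by omega), ← pow_one (X (⟨k, by omega⟩ : I)), X_pow_eq_monomial]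
  | algebraMap r =>
    rw [algebraMap_eq, ← mul_one (C r), ← smul_eq_C_mul,
      show (1 : A) = monomial 0 1 from ((congrFun monomial_zero' (1 : F₂)).trans C_1).symm]
    exact Submodule.smul_mem _ _ (Submodule.subset_span ⟨0, PS_zero n, rfl⟩)
  | add x y hx hy ihx ihy => exact add_mem ihx ihy
  | mul x y hx hy ihx ihy => exact spanMS_mul n x y ihx ihy

lemma MS_le_MV (n : ℕ) : MS n ⊆ MV n := by
  rintro p ⟨σ, ⟨h0, hs⟩, rfl⟩
  refine ⟨σ, ⟨h0, fun i hi => by have := hs i hi; omega, ?_⟩, rfl⟩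
  rcases Nat.eq_zero_or_pos (σ (vr n)) with h | h
  · omega
  · have := hs (vr n) (by omega); simp [vr] at this

lemma Vn_le_spanMV (n : ℕ) (hn : 1 ≤ n) (x : A) (hx : x ∈ Vn n) :
    x ∈ Submodule.span F₂ (MV n) := by
  obtain ⟨s, hs, s', hs', rfl⟩ := hx
  refine add_mem (Submodule.span_mono (MS_le_MV n) (Sn_le_spanMS n hn s hs)) ?_
  have hsp := Sn_le_spanMS n hn s' hs'
  clear hs hs'
  induction hsp using Submodule.span_induction with
  | mem p hp =>
    obtain ⟨σ, ⟨h0, hsupp⟩, rfl⟩ := hp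
    have hσn : σ (vr n) = 0 := by
      rcases Nat.eq_zero_or_pos (σ (vr n)) with h | h
      · exact h
      · have := hsupp (vr n) (by omega); simp [vr] at this
    refine Submodule.subset_span ⟨σ + Finsupp.single (vr n) 1, ⟨?_, ?_, ?_⟩, ?_⟩
    · rw [Finsupp.add_apply, Finsupp.single_apply,
        if_neg (by simp only [vr_eq_vr]; omega)]
      simpa using h0
    · intro i hi
      rw [Finsupp.add_apply] at hi
      rcases Nat.eq_zero_or_pos (σ i) with h | h
      · have : i = vr n := by
          by_contra hne
          rw [Finsupp.single_eq_of_ne' (fun hh => hne hh.symm)] at hi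
          omega
        rw [this]; simp [vr]
      · have := hsupp i (by omega); omega
    · rw [Finsupp.add_apply, Finsupp.single_eq_same, hσn]
    · rw [xi_succ, ← pow_one (X (vr n)), X_pow_eq_monomial, monomial_mul, mul_one]
  | zero => rw [zero_mul]; exact zero_mem _
  | add p q hp hq ihp ihq => rw [add_mul]; exact add_mem ihp ihq
  | smul c p hp ihp => rw [smul_mul_assoc]; exact Submodule.smul_mem _ _ ihp

lemma Hm_mem (n : ℕ) (σ : I →₀ ℕ) (hPV : PV n σ) :
    Hm n σ ∈ Submodule.span F₂ (MV n) := by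
  obtain ⟨h0, hsupp, hn1⟩ := hPV
  by_cases hex : ∃ k, k < n ∧ (2 ≤ σ (vr k) ∨ σ (vr (k + 1)) % 2 = 1)
  · rw [Hm, dif_pos hex]
    obtain ⟨hkn, hcond⟩ := Nat.find_spec hex
    set k := Nat.find hex with hk
    by_cases hpar : σ (vr (k + 1)) % 2 = 0
    · rw [if_pos hpar]
      have h2 : 2 ≤ σ (vr k) := by rcases hcond with h | h; exact h; omega
      refine Submodule.subset_span ⟨_, ⟨?_, ?_, ?_⟩, rfl⟩
      · rw [app3, if_neg (by omega : ¬ k + 1 = 0)]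
        by_cases hk0 : k = 0
        · rw [if_pos hk0]
          rw [hk0] at h2
          omega
        · rw [if_neg hk0]; omega
      · intro i hi
        rw [app3i] at hi
        by_cases hik : vr (k + 1) = i
        · rw [← hik]; simp [vr]; omega
        · rw [if_neg hik] at hi
          have : σ i ≠ 0 := by
            intro h; rw [h] at hi; simp at hi
          exact hsupp i this
      · rw [app3]
        rcases eq_or_ne (k + 1) n with he' | he'
        · rw [if_pos he', if_neg (by omega)]
          rw [he'] at hpar
          omega
        · rw [if_neg he', if_neg (by omega)]
          omega
    · rw [if_neg hpar]; exact zero_mem _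
  · rw [Hm, dif_neg hex]; exact zero_mem _

lemma Hlin_maps (n : ℕ) (x : A) (hx : x ∈ Submodule.span F₂ (MV n)) :
    Hlin n x ∈ Submodule.span F₂ (MV n) := by
  induction hx using Submodule.span_induction with
  | mem p hp =>
    obtain ⟨σ, hσ, rfl⟩ := hp
    rw [Hlin_monomial, one_smul]
    exact Hm_mem n σ hσ
  | zero => rw [map_zero]; exact zero_mem _
  | add p q hp hq ihp ihq => rw [map_add]; exact add_mem ihp ihq
  | smul c p hp ihp => rw [map_smul]; exact Submodule.smul_mem _ _ ihp

-- ### the key identity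
lemma key (n : ℕ) (σ : I →₀ ℕ) (hn : 1 ≤ n) (hPV : PV n σ) (hσ : σ ≠ 0) :
    Q 0 (Hm n σ) + Hlin n (Q 0 (monomial σ (1 : F₂))) = monomial σ (1 : F₂) := by
  obtain ⟨h0, hsupp, hn1⟩ := hPV
  have hex : ∃ k, k < n ∧ (2 ≤ σ (vr k) ∨ σ (vr (k + 1)) % 2 = 1) := by
    by_contra hno
    push_neg at hno
    apply hσ
    have hj : ∀ j, σ (vr j) = 0 := by
      intro j
      rcases Nat.lt_or_ge j n with hjn | hjn
      · have h1 := hno j hjn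
        rcases Nat.eq_zero_or_pos j with rfl | hp
        · omega
        · have h2 := hno (j - 1) (by omega)
          rw [show j - 1 + 1 = j by omega] at h2
          omega
      · rcases Nat.eq_or_lt_of_le hjn with hnj | hlt
        · have h2 := hno (j - 1) (by omega)
          rw [show j - 1 + 1 = j by omega] at h2
          rw [hnj] at hn1
          omega
        · rcases Nat.eq_zero_or_pos (σ (vr j)) with h | h
          · exact h
          · have := hsupp (vr j) (by omega)
            simp [vr] at this
            omega
    ext i
    have hi : i = vr (i.1 - 1) := Subtype.ext (by have := i.2; simp [vr]; omega)
    rw [hi, hj]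
    rfl
  obtain ⟨hkn, hcond⟩ := Nat.find_spec hex
  set k := Nat.find hex with hkdef
  have hnc : ∀ j, j < k → σ (vr j) < 2 ∧ σ (vr (j + 1)) % 2 ≠ 1 := by
    intro j hj
    have h1 := Nat.find_min hex hj
    simp only [not_and, not_or, not_le] at h1
    exact h1 (lt_trans hj hkn)
  have hz : ∀ j, j < k → σ (vr j) = 0 := by
    intro j hj
    have h1 := hnc j hj
    rcases Nat.eq_zero_or_pos j with rfl | hp
    · omega
    · have h2 := hnc (j - 1) (by omega)
      rw [show j - 1 + 1 = j by omega] at h2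
      omega
  have he : σ (vr k) % 2 = 0 := by
    rcases Nat.eq_zero_or_pos k with hk0 | hp
    · rw [hk0]; exact h0
    · have h2 := hnc (k - 1) (by omega)
      rw [show k - 1 + 1 = k by omega] at h2
      omega
  rw [dmono n σ hsupp h0, map_sum]
  by_cases hpar : σ (vr (k + 1)) % 2 = 1
  · -- odd case : Hm n σ = 0, one surviving term in the sum
    have hHm : Hm n σ = 0 := by
      rw [Hm_eval n k σ hkn hz he (Or.inr hpar), if_neg (by omega)]
    rw [hHm, map_zero, zero_add]
    rw [Finset.sum_eq_single k]
    · rw [if_pos hpar, Hlin_monomial, one_smul]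
      set τ := σ - Finsupp.single (vr (k + 1)) 1 + Finsupp.single (vr k) 2 with hτ
      have hτz : ∀ i, i < k → τ (vr i) = 0 := by
        intro i hik
        rw [hτ, app3, if_neg (by omega), if_neg (by omega), hz i hik]
      have hτk : τ (vr k) = σ (vr k) + 2 := by
        rw [hτ, app3, if_neg (by omega), if_pos rfl]
        omega
      have hτk1 : τ (vr (k + 1)) = σ (vr (k + 1)) - 1 := by
        rw [hτ, app3, if_pos rfl, if_neg (by omega)]
        omega
      rw [Hm_eval n k τ hkn hτz (by rw [hτk, Nat.add_mod_right]; exact he)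
        (Or.inl (by rw [hτk]; exact Nat.le_add_left 2 _)),
        if_pos (by rw [hτk1]; omega)]
      rw [hτ, L1 σ _ _ (Finsupp.single_le_iff.mpr (by omega))]
    · intro j hjr hjk
      rcases Nat.lt_or_ge j k with hjlt | hjge
      · rw [if_neg, map_zero]
        rcases eq_or_ne (j + 1) k with hjk1 | hjk1
        · rw [hjk1]; omega
        · rw [hz (j + 1) (by omega)]; omega
      · have hjgt : k < j := by omega
        by_cases hodd : σ (vr (j + 1)) % 2 = 1
        · rw [if_pos hodd, Hlin_monomial, one_smul]
          set τ := σ - Finsupp.single (vr (j + 1)) 1 + Finsupp.single (vr j) 2 with hτ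
          have hτz : ∀ i, i < k → τ (vr i) = 0 := by
            intro i hik
            rw [hτ, app3, if_neg (by omega), if_neg (by omega), hz i hik]
          have hτk : τ (vr k) = σ (vr k) := by
            rw [hτ, app3, if_neg (by omega), if_neg (by omega)]
            omega
          have hτk1 : τ (vr (k + 1)) % 2 = 1 := by
            rcases eq_or_ne j (k + 1) with hjk1 | hjk1
            · rw [hτ, app3, if_neg (by omega), if_pos hjk1]
              omega
            · rw [hτ, app3, if_neg (by omega), if_neg hjk1]
              omega
          rw [Hm_eval n k τ hkn hτz (by rw [hτk]; exact he) (Or.inr hτk1),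
            if_neg (by rw [hτk1]; omega)]
        · rw [if_neg hodd, map_zero]
    · intro h
      exact absurd (Finset.mem_range.mpr hkn) h
  · -- even case
    have hpar0 : σ (vr (k + 1)) % 2 = 0 := by omega
    have h2 : 2 ≤ σ (vr k) := by
      rcases hcond with h | h
      · exact h
      · omega
    set σ' := σ - Finsupp.single (vr k) 2 + Finsupp.single (vr (k + 1)) 1 with hσ'
    have hσ'app : ∀ i, σ' (vr i) = σ (vr i) - (if k = i then 2 else 0)
        + (if k + 1 = i then 1 else 0) := fun i => by rw [hσ', app3]
    have hHm : Hm n σ = monomial σ' 1 := by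
      rw [Hm_eval n k σ hkn hz he hcond, if_pos hpar0]
    have hsupp' : ∀ i : I, σ' i ≠ 0 → i.1 ≤ n + 1 := by
      intro i hi
      by_cases hik : vr (k + 1) = i
      · rw [← hik]; simp [vr]; omega
      · rw [hσ', app3i, if_neg hik] at hi
        refine hsupp i fun h => hi ?_
        rw [h]
        simp
    have h0' : σ' (vr 0) % 2 = 0 := by
      rcases Nat.eq_zero_or_pos k with hk0 | hkp
      · rw [hσ'app, if_pos (by omega), if_neg (by omega), ← hk0]
        omega
      · rw [hσ'app, if_neg (by omega), if_neg (by omega)]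
        omega
    rw [hHm, dmono n σ' hsupp' h0', ← Finset.sum_add_distrib]
    have hterm : ∀ j ∈ Finset.range n,
        ((if σ' (vr (j + 1)) % 2 = 1 then
            monomial (σ' - Finsupp.single (vr (j + 1)) 1 + Finsupp.single (vr j) 2) (1 : F₂)
          else 0)
          + Hlin n (if σ (vr (j + 1)) % 2 = 1 then
            monomial (σ - Finsupp.single (vr (j + 1)) 1 + Finsupp.single (vr j) 2) (1 : F₂)
          else 0))
          = if j = k then monomial σ 1 else 0 := by
      intro j hjr
      rcases eq_or_ne j k with hjk0 | hjk
      · rw [if_pos hjk0, hjk0, if_neg hpar, map_zero, add_zero]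
        have hj1 : σ' (vr (k + 1)) % 2 = 1 := by
          rw [hσ'app, if_neg (by omega), if_pos rfl]
          omega
        rw [if_pos hj1, hσ', L1 σ _ _ (Finsupp.single_le_iff.mpr h2)]
      · rw [if_neg hjk]
        rcases Nat.lt_or_ge j k with hjlt | hjge
        · have hj1 : σ (vr (j + 1)) % 2 = 0 := by
            rcases eq_or_ne (j + 1) k with hjk1 | hjk1
            · rw [hjk1]; omega
            · rw [hz (j + 1) (by omega)]
          have hj1' : σ' (vr (j + 1)) % 2 = 0 := by
            rcases eq_or_ne k (j + 1) with hkj | hkj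
            · rw [hσ'app, if_pos hkj, if_neg (by omega), ← hkj]
              omega
            · rw [hσ'app, if_neg hkj, if_neg (by omega)]
              omega
          rw [if_neg (by omega), if_neg (by omega), map_zero, add_zero]
        · have hjgt : k < j := by omega
          have hne : σ' (vr (j + 1)) = σ (vr (j + 1)) := by
            rw [hσ'app, if_neg (by omega), if_neg (by omega)]
            omega
          by_cases hodd : σ (vr (j + 1)) % 2 = 1
          · rw [if_pos (show σ' (vr (j + 1)) % 2 = 1 by rw [hne]; exact hodd), if_pos hodd,
              Hlin_monomial, one_smul]
            set τ := σ - Finsupp.single (vr (j + 1)) 1 + Finsupp.single (vr j) 2 with hτ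
            have hτz : ∀ i, i < k → τ (vr i) = 0 := by
              intro i hik
              rw [hτ, app3, if_neg (by omega), if_neg (by omega), hz i hik]
            have hτk : τ (vr k) = σ (vr k) := by
              rw [hτ, app3, if_neg (by omega), if_neg (by omega)]
              omega
            have hτk1 : τ (vr (k + 1)) % 2 = 0 := by
              rcases eq_or_ne j (k + 1) with hjk1 | hjk1
              · rw [hτ, app3, if_neg (by omega), if_pos hjk1]
                omega
              · rw [hτ, app3, if_neg (by omega), if_neg hjk1]
                omega
            rw [Hm_eval n k τ hkn hτz (by rw [hτk]; exact he) (Or.inl (by rw [hτk]; exact h2)),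
              if_pos hτk1]
            have hu : Finsupp.single (vr k) 2 ≤ σ - Finsupp.single (vr (j + 1)) 1 :=
              sle σ k 2 (j + 1) 1 (by omega) h2
            have hw : Finsupp.single (vr (j + 1)) 1 ≤ σ - Finsupp.single (vr k) 2 :=
              sle σ (j + 1) 1 k 2 (by omega) (by omega)
            have hcomm := commL σ (Finsupp.single (vr k) 2) (Finsupp.single (vr (k + 1)) 1)
              (Finsupp.single (vr (j + 1)) 1) (Finsupp.single (vr j) 2) hu hw
            rw [hτ, hσ', hcomm, addself]
          · rw [if_neg (show ¬ σ' (vr (j + 1)) % 2 = 1 by rw [hne]; exact hodd), if_neg hodd,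
              map_zero, add_zero]
    rw [Finset.sum_congr rfl hterm,
      Finset.sum_ite_eq' (Finset.range n) k fun _ => monomial σ 1,
      if_pos (Finset.mem_range.mpr hkn)]

lemma homotopy (n : ℕ) (hn : 1 ≤ n) (x : A) (hx : x ∈ Submodule.span F₂ (MV n)) :
    Q 0 (Hlin n x) + Hlin n (Q 0 x) + constantCoeff x • (1 : A) = x := by
  induction hx using Submodule.span_induction with
  | mem p hp =>
    obtain ⟨σ, hσ, rfl⟩ := hp
    by_cases hσ0 : σ = 0
    · subst hσ0
      have h1 : monomial (0 : I →₀ ℕ) (1 : F₂) = 1 :=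
        (congrFun monomial_zero' (1 : F₂)).trans C_1
      rw [h1, Derivation.map_one_eq_zero, map_zero, add_zero, ← h1,
        Hlin_monomial, one_smul, Hm_zero, map_zero, zero_add, h1, map_one, one_smul]
    · rw [Hlin_monomial, one_smul, key n σ hn hσ hσ0,
        constantCoeff_monomial, if_neg hσ0, zero_smul, add_zero]
  | zero => simp
  | add p q hp hq ihp ihq =>
    rw [map_add, map_add, map_add, map_add, map_add, add_smul]
    calc Q 0 (Hlin n p) + Q 0 (Hlin n q) + (Hlin n (Q 0 p) + Hlin n (Q 0 q)) +
        (constantCoeff p • (1 : A) + constantCoeff q • (1 : A))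
        = (Q 0 (Hlin n p) + Hlin n (Q 0 p) + constantCoeff p • (1 : A)) +
          (Q 0 (Hlin n q) + Hlin n (Q 0 q) + constantCoeff q • (1 : A)) := by abel
      _ = p + q := by rw [ihp, ihq]
  | smul c p hp ihp =>
    have hcc : constantCoeff (c • p) = c * constantCoeff p := by
      rw [smul_eq_C_mul, map_mul, constantCoeff_C]
    rw [(Hlin n).map_smul, Derivation.map_smul, (Q 0).map_smul, (Hlin n).map_smul,
      hcc, mul_smul, ← smul_add, ← smul_add, ihp]

-- ### parts (i) and (iii)
lemma ccQ0_Sn (n : ℕ) (s : A) (hs : s ∈ Sn n) : constantCoeff (Q 0 s) = 0 := by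
  induction hs using Algebra.adjoin_induction with
  | mem x hx =>
    rcases hx with hx | ⟨k, hk2, hkn, rfl⟩
    · rw [Set.mem_singleton_iff] at hx
      subst hx
      rw [sq, Derivation.leibniz, smul_eq_mul, addself, map_zero]
    · rw [xi_gen k (by omega), Q_X]
      rw [if_pos (by omega : 0 + 1 ≤ k)]
      rw [map_pow, xi_gen (k - (0 + 1)) (by omega), constantCoeff_X]
      norm_num
  | algebraMap r => rw [Derivation.map_algebraMap, map_zero]
  | add x y hx hy ihx ihy => rw [map_add, map_add, ihx, ihy, add_zero]
  | mul x y hx hy ihx ihy =>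
    rw [Derivation.leibniz, map_add, smul_eq_mul, smul_eq_mul, map_mul, map_mul,
      ihx, ihy, mul_zero, mul_zero, add_zero]

lemma Qm_Sn (n m : ℕ) (hm : n + 1 ≤ m) (s : A) (hs : s ∈ Sn n) : Q m s = 0 := by
  induction hs using Algebra.adjoin_induction with
  | mem x hx =>
    rcases hx with hx | ⟨k, hk2, hkn, rfl⟩
    · rw [Set.mem_singleton_iff] at hx
      subst hx
      have h1 : Q m (ξ 1) = 0 := by
        rw [xi_gen 1 le_rfl, Q_X, if_neg (show ¬ m + 1 ≤ 1 by omega)]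
      rw [sq, Derivation.leibniz, h1, smul_zero, add_zero]
    · rw [xi_gen k (by omega), Q_X, if_neg (show ¬ m + 1 ≤ k by omega)]
  | algebraMap r => rw [Derivation.map_algebraMap]
  | add x y hx hy ihx ihy => rw [map_add, ihx, ihy, add_zero]
  | mul x y hx hy ihx ihy => rw [Derivation.leibniz, ihx, ihy, smul_zero, smul_zero, add_zero]

/-- Corollary 2.21 (remaining cases): `H(z(n)/v_n; Q_0) ≅ F₂`, spanned by `1`, and
`H(z(n)/v_n; Q_m) ≅ H_*(z(n)/v_n)` for `m ≥ n + 1`. -/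
theorem margolisHomology_zn_mod_vn_rest (n : ℕ) (hn : 1 ≤ n) :
    (¬ ∃ y ∈ Vn n, Q 0 y = 1) ∧
    (∀ x ∈ Vn n, Q 0 x = 0 → ∃ y ∈ Vn n, ∃ c : F₂, x = Q 0 y + c • (1 : A)) ∧
    (∀ m : ℕ, n + 1 ≤ m → ∀ x ∈ Vn n, Q m x = 0) := by
  refine ⟨?_, ?_, ?_⟩
  · rintro ⟨y, ⟨s, hs, s', hs', rfl⟩, hQ⟩
    have h1 : constantCoeff (Q 0 (s + s' * ξ (n + 1))) = 0 := by
      rw [map_add, Derivation.leibniz, map_add, map_add, smul_eq_mul, smul_eq_mul,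
        map_mul, map_mul, ccQ0_Sn n s hs, ccQ0_Sn n s' hs']
      have e3 : constantCoeff (Q 0 (ξ (n + 1))) = 0 := by
        rw [xi_succ, Q0_X, map_pow, xi_gen n hn, constantCoeff_X]
        norm_num
      rw [e3, mul_zero, mul_zero]
      norm_num
    rw [hQ] at h1
    rw [map_one] at h1
    exact one_ne_zero h1
  · intro x hx hq
    have hxs := Vn_le_spanMV n hn x hx
    have hid := homotopy n hn x hxs
    rw [hq, map_zero, add_zero] at hid
    exact ⟨Hlin n x, spanMV_le_Vn n hn (Hlin_maps n x hxs), constantCoeff x, hid.symm⟩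
  · rintro m hm x ⟨s, hs, s', hs', rfl⟩
    rw [map_add, Derivation.leibniz, Qm_Sn n m hm s hs, Qm_Sn n m hm s' hs']
    have hξ : Q m (ξ (n + 1)) = 0 := by
      rw [xi_succ, Q_X, if_neg (by simp [vr]; omega)]
    rw [hξ, smul_zero, smul_zero, add_zero, add_zero]
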